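/- For all nonnegative integers n and r, and any complex λ ≠ 1, HB_n^{(ν,k)}(x) = \frac{1}{(1-λ)^r} \sum_{m=0}^{n} \binom{n}{m} \left( \sum_{l=0}^{r} \binom{r}{l} (-λ)^{r-l} HB_{n-m}^{(ν,k)}(l) \right) H_m^{(r)}(x|λ), where H_m^{(r)}(x|λ) are the Frobenius–Euler polynomials of order r. -/

import Mathlib

open PowerSeries Finset

/-- The power series e^{-t} over ℂ. -/
noncomputable def expNegC : PowerSeries ℂ := rescale (-1) (PowerSeries.exp ℂ)

/-- Li_k(1-e^{-t})/(1-e^{-t}) = ∑_{m≥0} (1-e^{-t})^m/(m+1)^k over ℂ. -/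
noncomputable def pbGFC (k : ℤ) : PowerSeries ℂ :=
  PowerSeries.mk fun n => ∑ m ∈ Finset.range (n + 1),
    (1 / ((m : ℂ) + 1) ^ k) * PowerSeries.coeff n ((1 - expNegC) ^ m)

/-- The power series e^{-ν t²/2} over ℂ. -/
noncomputable def hermGFC (ν : ℝ) : PowerSeries ℂ :=
  PowerSeries.mk fun n =>
    if Even n then (-(ν : ℂ) / 2) ^ (n / 2) / (Nat.factorial (n / 2)) else 0

/-- Hermite and poly-Bernoulli mixed-type polynomials over ℂ. -/
noncomputable def HBC (ν : ℝ) (k : ℤ) (n : ℕ) (x : ℂ) : ℂ :=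
  (Nat.factorial n) *
    PowerSeries.coeff n (hermGFC ν * pbGFC k * rescale x (PowerSeries.exp ℂ))

/-- Frobenius–Euler polynomials of order r, via ((1-λ)/(e^t-λ))^r e^{xt}. -/
noncomputable def frobEuler (r : ℕ) (lam : ℂ) (n : ℕ) (x : ℂ) : ℂ :=
  (Nat.factorial n) * PowerSeries.coeff n
    ((PowerSeries.C (1 - lam) * (PowerSeries.exp ℂ - PowerSeries.C lam)⁻¹) ^ r *
      rescale x (PowerSeries.exp ℂ))

open PowerSeries Finset

lemma key_pow (r : ℕ) (lam : ℂ) :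
    (PowerSeries.exp ℂ - PowerSeries.C lam) ^ r =
      ∑ l ∈ Finset.range (r + 1),
        PowerSeries.C ((r.choose l : ℂ) * (-lam) ^ (r - l)) *
          rescale (l : ℂ) (PowerSeries.exp ℂ) := by
  rw [sub_eq_add_neg, ← map_neg (PowerSeries.C (R := ℂ)), add_pow]
  refine Finset.sum_congr rfl fun l _ => ?_
  rw [exp_pow_eq_rescale_exp, ← map_pow, map_mul, map_natCast (PowerSeries.C (R := ℂ))]
  ring

lemma cauchy (Φ Ψ : PowerSeries ℂ) (n : ℕ) :
    (n.factorial : ℂ) * PowerSeries.coeff n (Φ * Ψ) =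
    ∑ m ∈ Finset.range (n + 1), (n.choose m : ℂ) *
      (((n - m).factorial : ℂ) * PowerSeries.coeff (n - m) Φ) *
      ((m.factorial : ℂ) * PowerSeries.coeff m Ψ) := by
  rw [mul_comm Φ Ψ, PowerSeries.coeff_mul,
    Finset.Nat.sum_antidiagonal_eq_sum_range_succ
      (fun i j => PowerSeries.coeff i Ψ * PowerSeries.coeff j Φ), Finset.mul_sum]
  refine Finset.sum_congr rfl fun m hm => ?_
  have hmn : m ≤ n := Nat.lt_succ_iff.mp (Finset.mem_range.mp hm)
  have : (n.choose m : ℂ) * (m.factorial : ℂ) * ((n - m).factorial : ℂ) = (n.factorial : ℂ) := by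
    rw [← Nat.cast_mul, ← Nat.cast_mul, Nat.choose_mul_factorial_mul_factorial hmn]
  rw [← this]; ring

theorem HB_eq_sum_frobeniusEuler (ν : ℝ) (hν : ν ≠ 0) (k : ℤ) (n r : ℕ)
    (lam : ℂ) (hlam : lam ≠ 1) (x : ℂ) :
    HBC ν k n x = (1 / (1 - lam) ^ r) * ∑ m ∈ Finset.range (n + 1),
      (n.choose m : ℂ) *
        (∑ l ∈ Finset.range (r + 1), (r.choose l : ℂ) * (-lam) ^ (r - l) * HBC ν k (n - m) l) *
        frobEuler r lam m x := by
  set G : PowerSeries ℂ := hermGFC ν * pbGFC k with hG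
  set P : PowerSeries ℂ := PowerSeries.exp ℂ - PowerSeries.C lam with hP
  have h1 : (1 : ℂ) - lam ≠ 0 := sub_ne_zero.mpr (Ne.symm hlam)
  have hcc : PowerSeries.constantCoeff P ≠ 0 := by
    simpa [hP, PowerSeries.constantCoeff_exp] using h1
  -- inner sum
  have hS : ∀ j : ℕ, (∑ l ∈ Finset.range (r + 1),
      (r.choose l : ℂ) * (-lam) ^ (r - l) * HBC ν k j l) =
      (j.factorial : ℂ) * PowerSeries.coeff j (G * P ^ r) := by
    intro j
    rw [hP, key_pow, Finset.mul_sum, map_sum, Finset.mul_sum]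
    refine Finset.sum_congr rfl fun l _ => ?_
    rw [HBC, hG, mul_left_comm G, PowerSeries.coeff_C_mul]
    ring
  have hmain : ∑ m ∈ Finset.range (n + 1), (n.choose m : ℂ) *
      (∑ l ∈ Finset.range (r + 1), (r.choose l : ℂ) * (-lam) ^ (r - l) * HBC ν k (n - m) l) *
      frobEuler r lam m x =
      (n.factorial : ℂ) * PowerSeries.coeff n
        ((G * P ^ r) * ((PowerSeries.C (1 - lam) * P⁻¹) ^ r *
          rescale x (PowerSeries.exp ℂ))) := by
    rw [cauchy]
    refine Finset.sum_congr rfl fun m _ => ?_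
    rw [hS, frobEuler]
  have hprod : (G * P ^ r) * ((PowerSeries.C (1 - lam) * P⁻¹) ^ r *
      rescale x (PowerSeries.exp ℂ)) =
      PowerSeries.C ((1 - lam) ^ r) * (G * rescale x (PowerSeries.exp ℂ)) := by
    have : P ^ r * (PowerSeries.C (1 - lam) * P⁻¹) ^ r =
        PowerSeries.C ((1 - lam) ^ r) := by
      have h2 : P * (PowerSeries.C (1 - lam) * P⁻¹) = PowerSeries.C (1 - lam) := by
        rw [mul_comm (PowerSeries.C (1 - lam)) P⁻¹, ← mul_assoc,
          PowerSeries.mul_inv_cancel P hcc, one_mul]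
      rw [← mul_pow, h2, map_pow]
    calc (G * P ^ r) * ((PowerSeries.C (1 - lam) * P⁻¹) ^ r *
        rescale x (PowerSeries.exp ℂ))
        = (P ^ r * (PowerSeries.C (1 - lam) * P⁻¹) ^ r) *
          (G * rescale x (PowerSeries.exp ℂ)) := by ring
      _ = _ := by rw [this]
  rw [hmain, hprod, PowerSeries.coeff_C_mul, HBC, hG]
  field_simp [pow_ne_zero r h1]
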